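/- Let D be a commutative ring with no p-torsion, φ : D → D a ring endomorphism, and δ : D → D a map with φ(x) = x^p + p·δ(x) for all x. Let I ⊆ D be an ideal with p ∈ I and x^p ∈ p·I for all x ∈ I. Fix m ≥ 0 and set J := (φ^m)⁻¹(I). Then: (1) x^{p^m} ∈ I for every x ∈ J; (2) I ⊆ J; (3) consequently J^{(p^m)} + pJ ⊆ I ⊆ J, where J^{(p^m)} is the ideal generated by x^{p^m} for x ∈ J. -/

import Mathlib

/-- For a p-torsion free δ-ring with ideal `I ∋ p` satisfying `x^p ∈ pI` for `x ∈ I`, and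
`J = (φ^m)⁻¹(I)`: (1) `x^(p^m) ∈ I` for `x ∈ J`; (2) `I ⊆ J`;
(3) `J^{(p^m)} + pJ ⊆ I ⊆ J`. -/
theorem stmt7 (p : ℕ) (hp : p.Prime) {D : Type*} [CommRing D]
    (htf : ∀ x : D, (p : D) * x = 0 → x = 0)
    (φ : D →+* D) (δ : D → D) (hδ : ∀ x : D, φ x = x ^ p + (p : D) * δ x)
    (I : Ideal D) (hpI : (p : D) ∈ I) (hpd : ∀ x ∈ I, ∃ y ∈ I, x ^ p = (p : D) * y)
    (m : ℕ) :
    (∀ x ∈ Ideal.comap (φ ^ m) I, x ^ p ^ m ∈ I) ∧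
    I ≤ Ideal.comap (φ ^ m) I ∧
    Ideal.span ((fun x => x ^ p ^ m) '' (Ideal.comap (φ ^ m) I : Set D))
        ⊔ Ideal.span {(p : D)} * Ideal.comap (φ ^ m) I ≤ I := by
  have hφI : ∀ x ∈ I, φ x ∈ I := by
    intro x hx
    rw [hδ]
    rcases hpd x hx with ⟨y, hy, hxy⟩
    rw [hxy]
    exact add_mem (I.mul_mem_left _ hy) (I.mul_mem_right _ hpI)
  have h1 : ∀ n : ℕ, ∀ x : D, (φ ^ n) x ∈ I → x ^ p ^ n ∈ I := by
    intro n
    induction n with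
    | zero => intro x hx; simpa using hx
    | succ n ih =>
      intro x hx
      have heq : (φ ^ (n + 1)) x = (φ ^ n) (φ x) := by rw [pow_succ]; rfl
      have h3 : (φ x) ^ p ^ n ∈ I := ih _ (heq ▸ hx)
      obtain ⟨c, hc⟩ := sub_dvd_pow_sub_pow (x ^ p) (φ x) (p ^ n)
      have hsub : x ^ p - φ x ∈ I := by
        rw [hδ]
        have : x ^ p - (x ^ p + (p : D) * δ x) = (p : D) * (-δ x) := by ring
        rw [this]
        exact I.mul_mem_right _ hpI
      have : x ^ p ^ (n + 1) = (φ x) ^ p ^ n + (x ^ p - φ x) * c := by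
        rw [← hc, pow_succ', pow_mul]; ring
      rw [this]
      exact add_mem h3 (I.mul_mem_right _ hsub)
  have h2 : I ≤ Ideal.comap (φ ^ m) I := by
    intro x hx
    simp only [Ideal.mem_comap]
    induction m with
    | zero => simpa using hx
    | succ n ih =>
      have : (φ ^ (n + 1)) x = φ ((φ ^ n) x) := by rw [pow_succ']; rfl
      rw [this]
      exact hφI _ ih
  refine ⟨fun x hx => h1 m x hx, h2, sup_le ?_ ?_⟩
  · rw [Ideal.span_le]
    rintro _ ⟨x, hx, rfl⟩
    exact h1 m x hx
  · exact le_trans Ideal.mul_le_left ((Ideal.span_singleton_le_iff_mem I).mpr hpI)
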